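/- arXiv:2306.12722 — 8 statements merged into one kernel-verified Lean document; each statement's English description precedes it below -/
import Mathlib

section
/- Quasi-best approximation for the discrete flux (abstract form of Lemma 4.5, first estimate): under the inf-sup condition and the consistency relation there exists a constant C > 0 depending only on the inf-sup constant c such that for every v ∈ Σ one has m(u − u_h, u − u_h)^{1/2} + s(u_h, u_h)^{1/2} + ‖e‖ ≤ C · ( m(u − v, u − v)^{1/2} + s(v, v)^{1/2} + ‖Dv − Du_h‖ ). -/
lemma bilin_cs {X : Type} [AddCommGroup X] [Module ℝ X] (B : X →ₗ[ℝ] X →ₗ[ℝ] ℝ)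
    (hs : ∀ x y : X, B x y = B y x) (hp : ∀ x : X, 0 ≤ B x x) (x y : X) :
    B x y ≤ Real.sqrt (B x x) * Real.sqrt (B y y) := by
  have hd : discrim (B y y) (2 * B x y) (B x x) ≤ 0 := by
    apply discrim_le_zero
    intro t
    have h := hp (x + t • y)
    simp only [map_add, map_smul, LinearMap.add_apply, LinearMap.smul_apply, smul_eq_mul] at h
    rw [hs y x] at h
    nlinarith [h]
  rw [discrim] at hd
  have h1 : (B x y) ^ 2 ≤ B x x * B y y := by nlinarith
  calc B x y ≤ |B x y| := le_abs_self _
    _ = Real.sqrt ((B x y) ^ 2) := (Real.sqrt_sq_eq_abs _).symm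
    _ ≤ Real.sqrt (B x x * B y y) := Real.sqrt_le_sqrt h1
    _ = _ := Real.sqrt_mul (hp x) _

lemma bilin_tri {X : Type} [AddCommGroup X] [Module ℝ X] (B : X →ₗ[ℝ] X →ₗ[ℝ] ℝ)
    (hs : ∀ x y : X, B x y = B y x) (hp : ∀ x : X, 0 ≤ B x x) (a b : X) :
    Real.sqrt (B (a + b) (a + b)) ≤ Real.sqrt (B a a) + Real.sqrt (B b b) := by
  have hcs := bilin_cs B hs hp a b
  have e1 : Real.sqrt (B a a) ^ 2 = B a a := Real.sq_sqrt (hp a)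
  have e2 : Real.sqrt (B b b) ^ 2 = B b b := Real.sq_sqrt (hp b)
  have key : B (a + b) (a + b) ≤ (Real.sqrt (B a a) + Real.sqrt (B b b)) ^ 2 := by
    simp only [map_add, LinearMap.add_apply]
    nlinarith [hs b a]
  calc Real.sqrt (B (a + b) (a + b)) ≤ Real.sqrt ((Real.sqrt (B a a) + Real.sqrt (B b b)) ^ 2) :=
        Real.sqrt_le_sqrt key
    _ = _ := Real.sqrt_sq (by positivity)

set_option maxHeartbeats 1000000 in
lemma arith_qba (c A B E A' B' F α β : ℝ) (hc : 0 < c)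
    (hA : 0 ≤ A) (hB : 0 ≤ B) (hE : 0 ≤ E) (hA' : 0 ≤ A') (hB' : 0 ≤ B')
    (hF : 0 ≤ F) (hα : 0 ≤ α) (hβ : 0 ≤ β)
    (h1 : α ^ 2 + β ^ 2 ≤ F * E + A' * α + B' * β)
    (h2 : c * E ≤ A + B) (h3 : A ≤ A' + α) (h4 : B ≤ B' + β) :
    A + B + E ≤ (1 + 1 / c) * (4 + 5 / c) * (A' + B' + F) := by
  set R := A' + B' + F with hRdef
  set t := α + β with htdef
  clear_value R t
  have hR : 0 ≤ R := by linarith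
  have ht : 0 ≤ t := by linarith
  have hFR : F ≤ R := by linarith
  have hcE : c * E ≤ t + R := by nlinarith
  have e0 : c ^ 2 * (α ^ 2 + β ^ 2) ≤ c * F * (t + R) + c ^ 2 * (A' * α) + c ^ 2 * (B' * β) := by
    nlinarith [mul_le_mul_of_nonneg_left hcE (mul_nonneg hc.le hF),
      mul_le_mul_of_nonneg_left h1 (by positivity : (0:ℝ) ≤ c ^ 2)]
  have e2 : c * F * t ≤ c ^ 2 * t ^ 2 / 8 + 2 * F ^ 2 := by nlinarith [sq_nonneg (c * t - 4 * F)]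
  have e3 : c ^ 2 * (A' * α) ≤ c ^ 2 * α ^ 2 / 4 + c ^ 2 * A' ^ 2 := by
    nlinarith [sq_nonneg (c * α - 2 * c * A')]
  have e4 : c ^ 2 * (B' * β) ≤ c ^ 2 * β ^ 2 / 4 + c ^ 2 * B' ^ 2 := by
    nlinarith [sq_nonneg (c * β - 2 * c * B')]
  have e5 : c * F * R ≤ c * R ^ 2 := by
    nlinarith [mul_nonneg hc.le (mul_nonneg hR (sub_nonneg.2 hFR))]
  have e6 : c ^ 2 * t ^ 2 ≤ 2 * c ^ 2 * (α ^ 2 + β ^ 2) := by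
    rw [htdef]; nlinarith [mul_nonneg (sq_nonneg c) (sq_nonneg (α - β))]
  have e7 : A' ^ 2 + B' ^ 2 ≤ R ^ 2 := by nlinarith [mul_nonneg hA' hB', mul_nonneg (add_nonneg hA' hB') hF]
  have e8 : F ^ 2 ≤ R ^ 2 := by nlinarith
  have key : (c * t) ^ 2 ≤ ((3 * c + 5) * R) ^ 2 := by
    have e9 : c ^ 2 * (A' ^ 2 + B' ^ 2) ≤ c ^ 2 * R ^ 2 :=
      mul_le_mul_of_nonneg_left e7 (by positivity)
    nlinarith [e0, e2, e3, e4, e5, e6, e8, e9,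
      mul_nonneg hc.le (sq_nonneg R), mul_nonneg (sq_nonneg c) (sq_nonneg R), sq_nonneg R]
  have ht' : c * t ≤ (3 * c + 5) * R := by
    have h := Real.sqrt_le_sqrt key
    rwa [Real.sqrt_sq (by positivity), Real.sqrt_sq (by positivity)] at h
  have hfin : c ^ 2 * (A + B + E) ≤ (c + 1) * (4 * c + 5) * R := by nlinarith
  have hdiv : A + B + E ≤ ((c + 1) * (4 * c + 5) * R) / c ^ 2 := by
    rw [le_div_iff₀ (by positivity)]; nlinarith
  have heq : (1 + 1 / c) * (4 + 5 / c) = (c + 1) * (4 * c + 5) / c ^ 2 := by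
    rw [eq_div_iff (by positivity : (c ^ 2 : ℝ) ≠ 0)]; field_simp
  rw [heq, div_mul_eq_mul_div]; exact hdiv


set_option maxHeartbeats 1000000 in

/-- Quasi-best approximation for the discrete flux (abstract form of Lemma 4.5,
first estimate): under the inf-sup condition and the consistency relation there
exists a constant `C > 0` depending only on the inf-sup constant `c` such that
for every `v ∈ Σ`,
`m(u − u_h, u − u_h)^{1/2} + s(u_h, u_h)^{1/2} + ‖e‖
  ≤ C · ( m(u − v, u − v)^{1/2} + s(v, v)^{1/2} + ‖Dv − Du_h‖ )`. -/
theorem quasi_best_approximation_flux (c : ℝ) (hc : 0 < c) :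
    ∃ C : ℝ, 0 < C ∧
      ∀ (X : Type) [AddCommGroup X] [Module ℝ X]
        (Q : Type) [NormedAddCommGroup Q] [InnerProductSpace ℝ Q]
        (Sig : Submodule ℝ X)
        (m s : X →ₗ[ℝ] X →ₗ[ℝ] ℝ),
        (∀ x y : X, m x y = m y x) →
        (∀ x : X, 0 ≤ m x x) →
        (∀ x y : X, s x y = s y x) →
        (∀ x : X, 0 ≤ s x x) →
        ∀ (D : Sig →ₗ[ℝ] Q),
        -- inf-sup condition
        (∀ p : Q, ∃ w : Sig,
            Real.sqrt (m (w : X) (w : X) + s (w : X) (w : X) + ‖D w‖ ^ 2) = 1 ∧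
            c * ‖p‖ ≤ (inner ℝ (D w) p : ℝ)) →
        ∀ (u : X) (uh : Sig) (e : Q),
        -- consistency relation
        (∀ w : Sig,
            m (uh : X) (w : X) + s (uh : X) (w : X) - m u (w : X)
              = (inner ℝ (D w) e : ℝ)) →
        ∀ v : Sig,
          Real.sqrt (m (u - (uh : X)) (u - (uh : X)))
              + Real.sqrt (s (uh : X) (uh : X)) + ‖e‖
            ≤ C * (Real.sqrt (m (u - (v : X)) (u - (v : X)))
              + Real.sqrt (s (v : X) (v : X)) + ‖D v - D uh‖) := by
  refine ⟨(1 + 1 / c) * (4 + 5 / c), by positivity, ?_⟩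
  intro X _ _ Q _ _ Sig m s hmsymm hmpos hssymm hspos D hinfsup u uh e hcons v
  set d : Sig := uh - v with hddef
  have hd : (d : X) = (uh : X) - (v : X) := by simp [hddef]
  have hud : (uh : X) = (v : X) + (d : X) := by rw [hd]; abel
  set A := Real.sqrt (m (u - (uh : X)) (u - (uh : X))) with hAdef
  set B := Real.sqrt (s (uh : X) (uh : X)) with hBdef
  set A' := Real.sqrt (m (u - (v : X)) (u - (v : X))) with hA'def
  set B' := Real.sqrt (s (v : X) (v : X)) with hB'def
  set F := ‖D v - D uh‖ with hFdef
  set α := Real.sqrt (m (d : X) (d : X)) with hαdef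
  set β := Real.sqrt (s (d : X) (d : X)) with hβdef
  have hα2 : α ^ 2 = m (d : X) (d : X) := Real.sq_sqrt (hmpos _)
  have hβ2 : β ^ 2 = s (d : X) (d : X) := Real.sq_sqrt (hspos _)
  have hA'2 : A' ^ 2 = m (u - (v : X)) (u - (v : X)) := Real.sq_sqrt (hmpos _)
  have hB'2 : B' ^ 2 = s (v : X) (v : X) := Real.sq_sqrt (hspos _)
  -- norm of D d
  have hDd : ‖D d‖ = F := by
    rw [hddef, map_sub, hFdef, norm_sub_rev]
  -- h1 : α² + β² ≤ F * ‖e‖ + A' * α + B' * β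
  have hexp : m (d : X) (d : X) + s (d : X) (d : X)
      = (inner ℝ (D d) e : ℝ) + m (u - (v : X)) (d : X) - s (v : X) (d : X) := by
    rw [← hcons d, hud]
    simp only [map_add, map_sub, LinearMap.add_apply, LinearMap.sub_apply]
    ring
  have hinner_le : (inner ℝ (D d) e : ℝ) ≤ F * ‖e‖ := by
    calc (inner ℝ (D d) e : ℝ) ≤ ‖D d‖ * ‖e‖ := real_inner_le_norm _ _
      _ = F * ‖e‖ := by rw [hDd]
  have hcs_m : m (u - (v : X)) (d : X) ≤ A' * α := bilin_cs m hmsymm hmpos _ _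
  have hcs_s : -(s (v : X) (d : X)) ≤ B' * β := by
    have h := bilin_cs s hssymm hspos (-(v : X)) (d : X)
    simpa [map_neg, LinearMap.neg_apply] using h
  have h1 : α ^ 2 + β ^ 2 ≤ F * ‖e‖ + A' * α + B' * β := by
    rw [hα2, hβ2]; linarith [hexp, hinner_le, hcs_m, hcs_s]
  -- h2 : c * ‖e‖ ≤ A + B
  obtain ⟨w, hw1, hw2⟩ := hinfsup e
  have hsum : m (w : X) (w : X) + s (w : X) (w : X) + ‖D w‖ ^ 2 = 1 := by
    have h0 : 0 ≤ m (w : X) (w : X) + s (w : X) (w : X) + ‖D w‖ ^ 2 :=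
      add_nonneg (add_nonneg (hmpos _) (hspos _)) (sq_nonneg _)
    nlinarith [Real.sq_sqrt h0, hw1]
  have hmw1 : Real.sqrt (m (w : X) (w : X)) ≤ 1 := by
    rw [show (1 : ℝ) = Real.sqrt 1 by simp]
    exact Real.sqrt_le_sqrt (by nlinarith [hspos (w : X), sq_nonneg ‖D w‖])
  have hsw1 : Real.sqrt (s (w : X) (w : X)) ≤ 1 := by
    rw [show (1 : ℝ) = Real.sqrt 1 by simp]
    exact Real.sqrt_le_sqrt (by nlinarith [hmpos (w : X), sq_nonneg ‖D w‖])
  have hinner_w : (inner ℝ (D w) e : ℝ) = m ((uh : X) - u) (w : X) + s (uh : X) (w : X) := by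
    rw [← hcons w, map_sub, LinearMap.sub_apply]; ring
  have hcsw_m : m ((uh : X) - u) (w : X) ≤ A * Real.sqrt (m (w : X) (w : X)) := by
    have h := bilin_cs m hmsymm hmpos ((uh : X) - u) (w : X)
    have heqm : m ((uh : X) - u) ((uh : X) - u) = m (u - (uh : X)) (u - (uh : X)) := by
      simp only [map_sub, LinearMap.sub_apply]
      linarith [hmsymm u (uh : X)]
    rwa [heqm, ← hAdef] at h
  have hcsw_s : s (uh : X) (w : X) ≤ B * Real.sqrt (s (w : X) (w : X)) :=
    bilin_cs s hssymm hspos _ _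
  have h2 : c * ‖e‖ ≤ A + B := by
    have hAn : 0 ≤ A := Real.sqrt_nonneg _
    have hBn : 0 ≤ B := Real.sqrt_nonneg _
    have hmn : 0 ≤ Real.sqrt (m (w : X) (w : X)) := Real.sqrt_nonneg _
    have hsn : 0 ≤ Real.sqrt (s (w : X) (w : X)) := Real.sqrt_nonneg _
    nlinarith [hw2, hinner_w, hcsw_m, hcsw_s,
      mul_le_mul_of_nonneg_left hmw1 hAn, mul_le_mul_of_nonneg_left hsw1 hBn]
  -- h3 : A ≤ A' + α
  have h3 : A ≤ A' + α := by
    have htri := bilin_tri m hmsymm hmpos (u - (v : X)) (-(d : X))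
    have heq3 : (u - (v : X)) + (-(d : X)) = u - (uh : X) := by rw [hd]; abel
    have hnegd : m (-(d : X)) (-(d : X)) = m (d : X) (d : X) := by
      simp [map_neg, LinearMap.neg_apply]
    rwa [heq3, hnegd, ← hAdef, ← hA'def, ← hαdef] at htri
  -- h4 : B ≤ B' + β
  have h4 : B ≤ B' + β := by
    have htri := bilin_tri s hssymm hspos ((v : X)) ((d : X))
    rwa [← hud, ← hBdef, ← hB'def, ← hβdef] at htri
  exact arith_qba c A B ‖e‖ A' B' F α β hc (Real.sqrt_nonneg _) (Real.sqrt_nonneg _)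
    (norm_nonneg _) (Real.sqrt_nonneg _) (Real.sqrt_nonneg _) (norm_nonneg _)
    (Real.sqrt_nonneg _) (Real.sqrt_nonneg _) h1 h2 h3 h4
end

section
/- Quasi-best approximation in the stronger norm (abstract form of Lemma 4.5, second estimate, case γ_u > 0): assume in addition that M : X × X → ℝ is a symmetric positive semidefinite bilinear form with m(x, x) ≤ M(x, x) for all x ∈ X and that there is a constant C_e > 0 with M(v, v) ≤ C_e² · (m(v, v) + s(v, v)) for all v ∈ Σ (abstracting the ghost-penalty norm equivalence (GP1b)). Then there exists a constant C > 0 depending only on c and C_e such that for every v ∈ Σ one has M(u − u_h, u − u_h)^{1/2} + s(u_h, u_h)^{1/2} + ‖e‖ ≤ C · ( M(u − v, u − v)^{1/2} + s(v, v)^{1/2} + ‖Dv − Du_h‖ ). -/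
namespace QBAhelp

variable {X : Type*} [AddCommGroup X] [Module ℝ X]

lemma bilin_sq_le (b : X →ₗ[ℝ] X →ₗ[ℝ] ℝ) (hsym : ∀ x y : X, b x y = b y x)
    (hpos : ∀ x : X, 0 ≤ b x x) (x y : X) : b x y ^ 2 ≤ b x x * b y y := by
  have h : ∀ t : ℝ, 0 ≤ b y y * (t * t) + (2 * b x y) * t + b x x := by
    intro t
    have h0 := hpos (x + t • y)
    have hexp : b (x + t • y) (x + t • y)
        = b y y * (t * t) + (2 * b x y) * t + b x x := by
      simp only [map_add, map_smul, LinearMap.add_apply, LinearMap.smul_apply,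
        smul_eq_mul]
      rw [hsym y x]; ring
    rw [hexp] at h0; linarith
  have hd := discrim_le_zero h
  rw [discrim] at hd
  nlinarith

lemma bilin_abs_le (b : X →ₗ[ℝ] X →ₗ[ℝ] ℝ) (hsym : ∀ x y : X, b x y = b y x)
    (hpos : ∀ x : X, 0 ≤ b x x) (x y : X) :
    |b x y| ≤ Real.sqrt (b x x) * Real.sqrt (b y y) := by
  have h := bilin_sq_le b hsym hpos x y
  rw [← Real.sqrt_sq_eq_abs, ← Real.sqrt_mul (hpos x)]
  exact Real.sqrt_le_sqrt h

lemma bilin_sqrt_add_le (b : X →ₗ[ℝ] X →ₗ[ℝ] ℝ) (hsym : ∀ x y : X, b x y = b y x)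
    (hpos : ∀ x : X, 0 ≤ b x x) (x y : X) :
    Real.sqrt (b (x + y) (x + y)) ≤ Real.sqrt (b x x) + Real.sqrt (b y y) := by
  have habs := bilin_abs_le b hsym hpos x y
  have hexp : b (x + y) (x + y) = b x x + 2 * b x y + b y y := by
    simp only [map_add, LinearMap.add_apply]
    rw [hsym y x]; ring
  have hle : b (x + y) (x + y)
      ≤ (Real.sqrt (b x x) + Real.sqrt (b y y)) ^ 2 := by
    have sx := Real.sq_sqrt (hpos x)
    have sy := Real.sq_sqrt (hpos y)
    have h1 := le_abs_self (b x y)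
    rw [hexp]; nlinarith
  calc Real.sqrt (b (x + y) (x + y))
      ≤ Real.sqrt ((Real.sqrt (b x x) + Real.sqrt (b y y)) ^ 2) :=
        Real.sqrt_le_sqrt hle
    _ = _ := Real.sqrt_sq (by positivity)

lemma bilin_neg (b : X →ₗ[ℝ] X →ₗ[ℝ] ℝ) (x : X) : b (-x) (-x) = b x x := by
  simp

end QBAhelp

set_option maxHeartbeats 2000000 in
/-- Quasi-best approximation in the stronger norm (abstract form of Lemma 4.5,
second estimate, case `γ_u > 0`): with an additional symmetric positive
semidefinite bilinear form `M` dominating `m` on `X` and dominated (on `Σ`) by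
`C_e² · (m + s)`, there exists `C > 0` depending only on `c` and `C_e` such
that for every `v ∈ Σ`,
`M(u − u_h, u − u_h)^{1/2} + s(u_h, u_h)^{1/2} + ‖e‖
  ≤ C · ( M(u − v, u − v)^{1/2} + s(v, v)^{1/2} + ‖Dv − Du_h‖ )`. -/
theorem quasi_best_approximation_flux_strong_norm
    (c : ℝ) (hc : 0 < c) (Ce : ℝ) (hCe : 0 < Ce) :
    ∃ C : ℝ, 0 < C ∧
      ∀ (X : Type) [AddCommGroup X] [Module ℝ X]
        (Q : Type) [NormedAddCommGroup Q] [InnerProductSpace ℝ Q]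
        (Sig : Submodule ℝ X)
        (m s M : X →ₗ[ℝ] X →ₗ[ℝ] ℝ),
        (∀ x y : X, m x y = m y x) →
        (∀ x : X, 0 ≤ m x x) →
        (∀ x y : X, s x y = s y x) →
        (∀ x : X, 0 ≤ s x x) →
        (∀ x y : X, M x y = M y x) →
        (∀ x : X, 0 ≤ M x x) →
        -- `m ≤ M` on all of `X`
        (∀ x : X, m x x ≤ M x x) →
        -- ghost-penalty norm equivalence (GP1b) on `Σ`
        (∀ v : Sig, M (v : X) (v : X)
            ≤ Ce ^ 2 * (m (v : X) (v : X) + s (v : X) (v : X))) →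
        ∀ (D : Sig →ₗ[ℝ] Q),
        -- inf-sup condition
        (∀ p : Q, ∃ w : Sig,
            Real.sqrt (m (w : X) (w : X) + s (w : X) (w : X) + ‖D w‖ ^ 2) = 1 ∧
            c * ‖p‖ ≤ (inner ℝ (D w) p : ℝ)) →
        ∀ (u : X) (uh : Sig) (e : Q),
        -- consistency relation
        (∀ w : Sig,
            m (uh : X) (w : X) + s (uh : X) (w : X) - m u (w : X)
              = (inner ℝ (D w) e : ℝ)) →
        ∀ v : Sig,
          Real.sqrt (M (u - (uh : X)) (u - (uh : X)))
              + Real.sqrt (s (uh : X) (uh : X)) + ‖e‖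
            ≤ C * (Real.sqrt (M (u - (v : X)) (u - (v : X)))
              + Real.sqrt (s (v : X) (v : X)) + ‖D v - D uh‖) := by
  classical
  set α : ℝ := 1 + (Ce + 1) / c with hα
  set β : ℝ := 1 / c with hβ
  refine ⟨(1 + 1 / c) * (1 + (Ce + 1) * (1 + α + β)), by positivity, ?_⟩
  intro X _ _ Q _ _ Sig m s M hmsym hmpos hssym hspos hMsym hMpos hmM hGP D
    hinfsup u uh e hcons v
  -- notation
  set dS : Sig := uh - v with hdS
  have hdX : (dS : X) = (uh : X) - (v : X) := rfl
  set dX : X := (uh : X) - (v : X) with hdXdef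
  set N : ℝ := Real.sqrt (m dX dX + s dX dX) with hNdef
  have hNnn : 0 ≤ N := Real.sqrt_nonneg _
  have hNsq : N ^ 2 = m dX dX + s dX dX :=
    Real.sq_sqrt (by have := hmpos dX; have := hspos dX; linarith)
  set a1 : ℝ := Real.sqrt (M (u - (v : X)) (u - (v : X))) with ha1
  set a2 : ℝ := Real.sqrt (s (v : X) (v : X)) with ha2
  set B : ℝ := ‖D v - D uh‖ with hB
  set Ek : ℝ := ‖e‖ with hEk
  set T1 : ℝ := Real.sqrt (M (u - (uh : X)) (u - (uh : X))) with hT1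
  set T2 : ℝ := Real.sqrt (s (uh : X) (uh : X)) with hT2
  have ha1nn : 0 ≤ a1 := Real.sqrt_nonneg _
  have ha2nn : 0 ≤ a2 := Real.sqrt_nonneg _
  have hBnn : 0 ≤ B := norm_nonneg _
  have hEknn : 0 ≤ Ek := norm_nonneg _
  have hT1nn : 0 ≤ T1 := Real.sqrt_nonneg _
  have hT2nn : 0 ≤ T2 := Real.sqrt_nonneg _
  -- sqrt of components ≤ N
  have hmdN : Real.sqrt (m dX dX) ≤ N :=
    Real.sqrt_le_sqrt (by have := hspos dX; linarith)
  have hsdN : Real.sqrt (s dX dX) ≤ N :=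
    Real.sqrt_le_sqrt (by have := hmpos dX; linarith)
  -- √M(dX) ≤ Ce * N
  have hMdN : Real.sqrt (M dX dX) ≤ Ce * N := by
    have h1 : M dX dX ≤ (Ce * N) ^ 2 := by
      have := hGP dS
      rw [hdX] at this
      calc M dX dX ≤ Ce ^ 2 * (m dX dX + s dX dX) := this
        _ = (Ce * N) ^ 2 := by rw [← hNsq]; ring
    calc Real.sqrt (M dX dX) ≤ Real.sqrt ((Ce * N) ^ 2) := Real.sqrt_le_sqrt h1
      _ = Ce * N := Real.sqrt_sq (by positivity)
  -- step 1 : N^2 ≤ (a1 + a2) * N + B * Ek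
  have hstep1 : N ^ 2 ≤ (a1 + a2) * N + B * Ek := by
    have hcd := hcons dS
    rw [hdX] at hcd
    have hid : m dX dX + s dX dX
        = m (u - (v : X)) dX - s (v : X) dX + (inner ℝ (D dS) e : ℝ) := by
      rw [← hcd]
      simp only [hdXdef, map_sub, LinearMap.sub_apply]
      ring
    have h1 : m (u - (v : X)) dX ≤ a1 * N := by
      have habs := QBAhelp.bilin_abs_le m hmsym hmpos (u - (v : X)) dX
      have hmon : Real.sqrt (m (u - (v:X)) (u - (v:X))) ≤ a1 :=
        Real.sqrt_le_sqrt (hmM _)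
      calc m (u - (v : X)) dX ≤ |m (u - (v : X)) dX| := le_abs_self _
        _ ≤ Real.sqrt (m (u - (v:X)) (u - (v:X))) * Real.sqrt (m dX dX) := habs
        _ ≤ a1 * N := by
            apply mul_le_mul hmon hmdN (Real.sqrt_nonneg _) ha1nn
    have h2 : -(s (v : X) dX) ≤ a2 * N := by
      have habs := QBAhelp.bilin_abs_le s hssym hspos (v : X) dX
      calc -(s (v : X) dX) ≤ |s (v : X) dX| := neg_le_abs _
        _ ≤ a2 * Real.sqrt (s dX dX) := habs
        _ ≤ a2 * N := by
            exact mul_le_mul_of_nonneg_left hsdN ha2nn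
    have h3 : (inner ℝ (D dS) e : ℝ) ≤ B * Ek := by
      have := real_inner_le_norm (D dS) e
      have hDd : ‖D dS‖ = B := by
        rw [hdS, map_sub, norm_sub_rev]
      rw [hDd] at this
      exact this
    rw [hNsq]
    calc m dX dX + s dX dX
        = m (u - (v : X)) dX - s (v : X) dX + (inner ℝ (D dS) e : ℝ) := hid
      _ ≤ a1 * N + a2 * N + B * Ek := by linarith
      _ = (a1 + a2) * N + B * Ek := by ring
  -- step 2 : c * Ek ≤ T1 + T2
  have hstep2 : c * Ek ≤ T1 + T2 := by
    obtain ⟨w, hw1, hw2⟩ := hinfsup e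
    have hw1' : m (w : X) (w : X) + s (w : X) (w : X) + ‖D w‖ ^ 2 = 1 := by
      have h0 : 0 ≤ m (w : X) (w : X) + s (w : X) (w : X) + ‖D w‖ ^ 2 := by
        have := hmpos (w : X); have := hspos (w : X)
        positivity
      nlinarith [Real.sq_sqrt h0, hw1]
    have hmw1 : Real.sqrt (m (w : X) (w : X)) ≤ 1 := by
      rw [show (1:ℝ) = Real.sqrt 1 by simp]
      apply Real.sqrt_le_sqrt
      have := hspos (w : X)
      nlinarith [sq_nonneg ‖D w‖]
    have hsw1 : Real.sqrt (s (w : X) (w : X)) ≤ 1 := by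
      rw [show (1:ℝ) = Real.sqrt 1 by simp]
      apply Real.sqrt_le_sqrt
      have := hmpos (w : X)
      nlinarith [sq_nonneg ‖D w‖]
    have hDwe : (inner ℝ (D w) e : ℝ)
        = m ((uh : X) - u) (w : X) + s (uh : X) (w : X) := by
      rw [← hcons w, map_sub, LinearMap.sub_apply]; ring
    have hb1 : m ((uh : X) - u) (w : X) ≤ T1 := by
      have habs := QBAhelp.bilin_abs_le m hmsym hmpos ((uh : X) - u) (w : X)
      have hneg : m ((uh:X) - u) ((uh:X) - u) = m (u - (uh:X)) (u - (uh:X)) := by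
        have := QBAhelp.bilin_neg m (u - (uh : X))
        rw [neg_sub] at this
        exact this
      have hmon : Real.sqrt (m ((uh:X) - u) ((uh:X) - u)) ≤ T1 := by
        rw [hneg]
        exact Real.sqrt_le_sqrt (hmM _)
      calc m ((uh : X) - u) (w : X) ≤ |m ((uh : X) - u) (w : X)| := le_abs_self _
        _ ≤ Real.sqrt (m ((uh:X) - u) ((uh:X) - u)) * Real.sqrt (m (w:X) (w:X)) := habs
        _ ≤ T1 * 1 := mul_le_mul hmon hmw1 (Real.sqrt_nonneg _) hT1nn
        _ = T1 := mul_one _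
    have hb2 : s (uh : X) (w : X) ≤ T2 := by
      have habs := QBAhelp.bilin_abs_le s hssym hspos (uh : X) (w : X)
      calc s (uh : X) (w : X) ≤ |s (uh : X) (w : X)| := le_abs_self _
        _ ≤ T2 * Real.sqrt (s (w:X) (w:X)) := habs
        _ ≤ T2 * 1 := mul_le_mul_of_nonneg_left hsw1 hT2nn
        _ = T2 := mul_one _
    calc c * Ek ≤ (inner ℝ (D w) e : ℝ) := hw2
      _ = m ((uh : X) - u) (w : X) + s (uh : X) (w : X) := hDwe
      _ ≤ T1 + T2 := by linarith
  -- step 3 : T1 ≤ a1 + Ce * N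
  have hstep3 : T1 ≤ a1 + Ce * N := by
    have htri := QBAhelp.bilin_sqrt_add_le M hMsym hMpos (u - (v : X)) (-dX)
    have hsum : u - (v : X) + (-dX) = u - (uh : X) := by
      rw [hdXdef]; abel
    rw [hsum, QBAhelp.bilin_neg] at htri
    exact le_trans htri (by linarith [hMdN])
  -- step 4 : T2 ≤ a2 + N
  have hstep4 : T2 ≤ a2 + N := by
    have htri := QBAhelp.bilin_sqrt_add_le s hssym hspos (v : X) dX
    have hsum : (v : X) + dX = (uh : X) := by rw [hdXdef]; abel
    rw [hsum] at htri
    exact le_trans htri (by linarith [hsdN])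
  -- combine
  set A : ℝ := a1 + a2 with hA
  set K : ℝ := A + B with hK
  have hAnn : 0 ≤ A := by positivity
  have hKnn : 0 ≤ K := by positivity
  have hEkb : Ek ≤ (A + (Ce + 1) * N) / c := by
    rw [le_div_iff₀ hc]
    calc Ek * c = c * Ek := by ring
      _ ≤ T1 + T2 := hstep2
      _ ≤ A + (Ce + 1) * N := by rw [hA]; linarith
  have hN2b : N ^ 2 ≤ A * N + B * ((A + (Ce + 1) * N) / c) := by
    calc N ^ 2 ≤ A * N + B * Ek := hstep1
      _ ≤ A * N + B * ((A + (Ce + 1) * N) / c) := by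
          have := mul_le_mul_of_nonneg_left hEkb hBnn
          linarith
  -- N ≤ (1 + α + β) * K
  have hNK : N ≤ (1 + α + β) * K := by
    have hαβ : 0 < α ∧ 0 < β := by
      constructor
      · rw [hα]; positivity
      · rw [hβ]; positivity
    rcases le_or_gt N K with h | h
    · have : K ≤ (1 + α + β) * K := by nlinarith [hαβ.1, hαβ.2]
      linarith
    · -- K < N, so N > 0
      have hNpos : 0 < N := lt_of_le_of_lt hKnn h
      have hAK : A ≤ K := by rw [hK]; linarith
      have hBK : B ≤ K := by rw [hK]; linarith
      have key : c * N ^ 2 ≤ (c + Ce + 2) * (K * N) := by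
        have h1 : c * N ^ 2 ≤ c * (A * N) + B * A + B * ((Ce + 1) * N) := by
          have := mul_le_mul_of_nonneg_left hN2b (le_of_lt hc)
          have hd : c * (B * ((A + (Ce + 1) * N) / c)) = B * A + B * ((Ce+1) * N) := by
            field_simp
          nlinarith [this, hd]
        have h2 : A * N ≤ K * N := mul_le_mul_of_nonneg_right hAK hNnn
        have h3 : B * A ≤ K * N := by nlinarith
        have h4 : B * ((Ce + 1) * N) ≤ (Ce + 1) * (K * N) := by nlinarith
        nlinarith
      have hKN : c * N ≤ (c + Ce + 2) * K := by
        have := key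
        nlinarith [hNpos]
      rw [hα, hβ]
      rw [← sub_nonneg]
      have : (1 + (1 + (Ce + 1) / c) + 1 / c) * K - N
          = ((c + Ce + 2) * K - c * N) / c + K := by
        field_simp; ring
      rw [this]
      have h5 : 0 ≤ ((c + Ce + 2) * K - c * N) / c := by
        apply div_nonneg _ (le_of_lt hc); linarith
      linarith
  -- final
  have hfin : T1 + T2 + Ek ≤ (1 + 1/c) * (1 + (Ce + 1) * (1 + α + β)) * K := by
    have h1 : T1 + T2 ≤ A + (Ce + 1) * N := by rw [hA]; linarith
    have h2 : Ek ≤ (A + (Ce + 1) * N) / c := hEkb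
    have h3 : A + (Ce + 1) * N ≤ K + (Ce + 1) * ((1 + α + β) * K) := by
      have : (Ce + 1) * N ≤ (Ce + 1) * ((1 + α + β) * K) :=
        mul_le_mul_of_nonneg_left hNK (by linarith : (0:ℝ) ≤ Ce + 1)
      have hAK : A ≤ K := by rw [hK]; linarith
      linarith
    have h4 : Ek ≤ (K + (Ce + 1) * ((1 + α + β) * K)) / c := by
      exact le_trans h2 ((div_le_div_iff_of_pos_right hc).mpr h3)
    calc T1 + T2 + Ek
        ≤ (K + (Ce + 1) * ((1 + α + β) * K))
          + (K + (Ce + 1) * ((1 + α + β) * K)) / c :=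
            add_le_add (le_trans h1 h3) h4
      _ = (1 + 1/c) * (1 + (Ce + 1) * (1 + α + β)) * K := by
          field_simp
  calc T1 + T2 + Ek ≤ (1 + 1/c) * (1 + (Ce + 1) * (1 + α + β)) * K := hfin
    _ = (1 + 1/c) * (1 + (Ce + 1) * (1 + α + β)) * (a1 + a2 + B) := by
        rw [hK, hA]
end

section
/- Pressure bound (abstract form of the first step (eq. phbarbound) in the proof of Lemma 4.5): under the inf-sup condition and the consistency relation, for every v ∈ Σ one has ‖e‖ ≤ (√2 / c) · ( m(u − v, u − v)^{1/2} + s(v, v)^{1/2} + ‖v − u_h‖_{m,s} ). -/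
lemma bil_cs {X : Type*} [AddCommGroup X] [Module ℝ X] (B : X →ₗ[ℝ] X →ₗ[ℝ] ℝ)
    (hsymm : ∀ x y : X, B x y = B y x) (hpos : ∀ x : X, 0 ≤ B x x) (x y : X) :
    B x y ≤ Real.sqrt (B x x) * Real.sqrt (B y y) := by
  have key : ∀ t : ℝ, 0 ≤ B y y * (t * t) + (-2 * B x y) * t + B x x := by
    intro t
    have h0 := hpos (x - t • y)
    have expand : B (x - t • y) (x - t • y)
        = B y y * (t * t) + (-2 * B x y) * t + B x x := by
      simp only [map_sub, map_smul, LinearMap.sub_apply, LinearMap.smul_apply,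
        smul_eq_mul]
      rw [hsymm y x]
      ring
    linarith [expand ▸ h0]
  have hd := discrim_le_zero key
  have hsq : (B x y) ^ 2 ≤ B x x * B y y := by
    unfold discrim at hd; nlinarith
  calc B x y ≤ |B x y| := le_abs_self _
    _ = Real.sqrt ((B x y) ^ 2) := (Real.sqrt_sq_eq_abs _).symm
    _ ≤ Real.sqrt (B x x * B y y) := Real.sqrt_le_sqrt hsq
    _ = _ := Real.sqrt_mul (hpos x) _

/-- Pressure bound (abstract form of the first step (eq. phbarbound) in the
proof of Lemma 4.5): under the inf-sup condition and the consistency relation,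
for every `v ∈ Σ`,
`‖e‖ ≤ (√2 / c) · ( m(u − v, u − v)^{1/2} + s(v, v)^{1/2} + ‖v − u_h‖_{m,s} )`. -/
theorem pressure_bound
    (X : Type*) [AddCommGroup X] [Module ℝ X]
    (Q : Type*) [NormedAddCommGroup Q] [InnerProductSpace ℝ Q]
    (Sig : Submodule ℝ X)
    (m s : X →ₗ[ℝ] X →ₗ[ℝ] ℝ)
    (hm_symm : ∀ x y : X, m x y = m y x)
    (hm_pos : ∀ x : X, 0 ≤ m x x)
    (hs_symm : ∀ x y : X, s x y = s y x)
    (hs_pos : ∀ x : X, 0 ≤ s x x)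
    (D : Sig →ₗ[ℝ] Q)
    (c : ℝ) (hc : 0 < c)
    -- inf-sup condition
    (hinfsup : ∀ p : Q, ∃ w : Sig,
        Real.sqrt (m (w : X) (w : X) + s (w : X) (w : X) + ‖D w‖ ^ 2) = 1 ∧
        c * ‖p‖ ≤ (inner ℝ (D w) p : ℝ))
    (u : X) (uh : Sig) (e : Q)
    -- consistency relation
    (hconsist : ∀ w : Sig,
        m (uh : X) (w : X) + s (uh : X) (w : X) - m u (w : X)
          = (inner ℝ (D w) e : ℝ)) :
    ∀ v : Sig,
      ‖e‖ ≤ (Real.sqrt 2 / c) *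
        (Real.sqrt (m (u - (v : X)) (u - (v : X)))
          + Real.sqrt (s (v : X) (v : X))
          + Real.sqrt (m ((v : X) - (uh : X)) ((v : X) - (uh : X))
              + s ((v : X) - (uh : X)) ((v : X) - (uh : X)))) := by
  intro v
  obtain ⟨w, hw1, hw2⟩ := hinfsup e
  set W : X := (w : X) with hW
  have h0 : 0 ≤ m W W + s W W + ‖D w‖ ^ 2 := by
    have := hm_pos W; have := hs_pos W; positivity
  have hnorm : m W W + s W W + ‖D w‖ ^ 2 = 1 := by
    have h1' := Real.sq_sqrt h0
    rw [hw1] at h1'; linarith [h1']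
  have hmw : m W W ≤ 1 := by nlinarith [hs_pos W, sq_nonneg ‖D w‖]
  have hsw : s W W ≤ 1 := by nlinarith [hm_pos W, sq_nonneg ‖D w‖]
  have hmsw : m W W + s W W ≤ 1 := by nlinarith [sq_nonneg ‖D w‖]
  set B : X →ₗ[ℝ] X →ₗ[ℝ] ℝ := m + s with hB
  have hBapp : ∀ x y : X, B x y = m x y + s x y := by intro x y; simp [hB]
  have hBsymm : ∀ x y : X, B x y = B y x := by
    intro x y; rw [hBapp, hBapp, hm_symm, hs_symm]
  have hBpos : ∀ x : X, 0 ≤ B x x := by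
    intro x; rw [hBapp]; exact add_nonneg (hm_pos x) (hs_pos x)
  -- split the consistency term
  have hsplit : (inner ℝ (D w) e : ℝ)
      = -(m (u - (v : X)) W) + s ((v:X)) W + -(B ((v:X) - (uh:X)) W) := by
    rw [← hconsist w]
    simp only [hBapp, map_sub, LinearMap.sub_apply, ← hW]
    ring
  -- Cauchy–Schwarz bounds for the three pieces
  have h1 : -(m (u - (v:X)) W) ≤ Real.sqrt (m (u - (v:X)) (u - (v:X))) := by
    have hcs := bil_cs m hm_symm hm_pos ((v:X) - u) W
    have heq0 : (v:X) - u = -(u - (v:X)) := (neg_sub _ _).symm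
    rw [heq0] at hcs
    simp only [map_neg, LinearMap.neg_apply, neg_neg] at hcs
    have hsq : Real.sqrt (m W W) ≤ 1 := Real.sqrt_le_one.mpr hmw
    calc -(m (u - (v:X)) W) ≤ Real.sqrt (m (u - (v:X)) (u - (v:X))) * Real.sqrt (m W W) := hcs
      _ ≤ Real.sqrt (m (u - (v:X)) (u - (v:X))) * 1 :=
          mul_le_mul_of_nonneg_left hsq (Real.sqrt_nonneg _)
      _ = _ := mul_one _
  have h2 : s ((v:X)) W ≤ Real.sqrt (s (v:X) (v:X)) := by
    have hcs := bil_cs s hs_symm hs_pos (v:X) W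
    have hsq : Real.sqrt (s W W) ≤ 1 := Real.sqrt_le_one.mpr hsw
    calc s ((v:X)) W ≤ Real.sqrt (s (v:X) (v:X)) * Real.sqrt (s W W) := hcs
      _ ≤ Real.sqrt (s (v:X) (v:X)) * 1 :=
          mul_le_mul_of_nonneg_left hsq (Real.sqrt_nonneg _)
      _ = _ := mul_one _
  have h3 : -(B ((v:X) - (uh:X)) W)
      ≤ Real.sqrt (m ((v:X) - (uh:X)) ((v:X) - (uh:X))
          + s ((v:X) - (uh:X)) ((v:X) - (uh:X))) := by
    have hcs := bil_cs B hBsymm hBpos ((uh:X) - (v:X)) W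
    have heq0 : (uh:X) - (v:X) = -((v:X) - (uh:X)) := (neg_sub _ _).symm
    rw [heq0] at hcs
    simp only [map_neg, LinearMap.neg_apply, neg_neg] at hcs
    rw [hBapp ((v:X) - (uh:X)) ((v:X) - (uh:X))] at hcs
    have hsqW : Real.sqrt (B W W) ≤ 1 := by
      rw [hBapp]; exact Real.sqrt_le_one.mpr hmsw
    calc -(B ((v:X) - (uh:X)) W)
        ≤ Real.sqrt (m ((v:X) - (uh:X)) ((v:X) - (uh:X))
            + s ((v:X) - (uh:X)) ((v:X) - (uh:X))) * Real.sqrt (B W W) := hcs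
      _ ≤ _ * 1 := mul_le_mul_of_nonneg_left hsqW (Real.sqrt_nonneg _)
      _ = _ := mul_one _
  set S : ℝ := Real.sqrt (m (u - (v:X)) (u - (v:X)))
      + Real.sqrt (s (v:X) (v:X))
      + Real.sqrt (m ((v:X) - (uh:X)) ((v:X) - (uh:X))
          + s ((v:X) - (uh:X)) ((v:X) - (uh:X))) with hS
  have hmain : c * ‖e‖ ≤ S := by
    calc c * ‖e‖ ≤ (inner ℝ (D w) e : ℝ) := hw2
      _ = -(m (u - (v : X)) W) + s ((v:X)) W + -(B ((v:X) - (uh:X)) W) := hsplit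
      _ ≤ S := by rw [hS]; linarith
  have hS0 : 0 ≤ S := by rw [hS]; positivity
  have hsqrt2 : (1:ℝ) ≤ Real.sqrt 2 := by
    rw [show (1:ℝ) = Real.sqrt 1 by simp]
    exact Real.sqrt_le_sqrt (by norm_num)
  rw [div_mul_eq_mul_div, le_div_iff₀ hc]
  calc ‖e‖ * c = c * ‖e‖ := mul_comm _ _
    _ ≤ S := hmain
    _ ≤ Real.sqrt 2 * S := le_mul_of_one_le_left hS0 hsqrt2
end

section
/- Discrete error bound (abstract form of inequality (4.11)/(eq. intermediate:b) in the proof of Lemma 4.5): under the inf-sup condition and the consistency relation there exists a constant C > 0 depending only on the inf-sup constant c such that for every v ∈ Σ one has ‖v − u_h‖_{m,s} ≤ C · ( m(u − v, u − v)^{1/2} + s(v, v)^{1/2} + ‖Dv − Du_h‖ ). -/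
/-- Cauchy–Schwarz inequality for a symmetric positive semidefinite bilinear form. -/
lemma cs_aux {X : Type} [AddCommGroup X] [Module ℝ X] (m : X →ₗ[ℝ] X →ₗ[ℝ] ℝ)
    (hsym : ∀ x y, m x y = m y x) (hpos : ∀ x, 0 ≤ m x x) (x y : X) :
    m x y ≤ Real.sqrt (m x x) * Real.sqrt (m y y) := by
  have key : (m x y) ^ 2 ≤ m x x * m y y := by
    have h : ∀ t : ℝ, 0 ≤ m y y * (t * t) + (2 * m x y) * t + m x x := by
      intro t
      have h0 := hpos (x + t • y)
      have hexp : m (x + t • y) (x + t • y)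
          = m y y * (t * t) + (2 * m x y) * t + m x x := by
        simp only [map_add, map_smul, LinearMap.add_apply, LinearMap.smul_apply,
          smul_eq_mul, hsym y x]
        ring
      rw [hexp] at h0; linarith
    have hd := discrim_le_zero h
    rw [discrim] at hd
    nlinarith [hd]
  calc m x y ≤ |m x y| := le_abs_self _
    _ = Real.sqrt ((m x y) ^ 2) := (Real.sqrt_sq_eq_abs _).symm
    _ ≤ Real.sqrt (m x x * m y y) := Real.sqrt_le_sqrt key
    _ = _ := Real.sqrt_mul (hpos x) _


/-- Pure real-arithmetic quadratic absorption step. -/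
lemma quad_bound (c A B N x : ℝ) (hc : 0 < c) (hA0 : 0 ≤ A) (hB0 : 0 ≤ B)
    (hN0 : 0 ≤ N) (hx0 : 0 ≤ x)
    (hquad : c * x ^ 2 ≤ c * (A + B) * x + N * (2 * x + A + B)) :
    x ≤ 2 * (1 + 2 / c) * (A + B + N) := by
  by_contra hcon
  push_neg at hcon
  have hR0 : 0 ≤ A + B + N := by positivity
  have hxpos : 0 < x := lt_of_le_of_lt (by positivity) hcon
  have h5 : c * x ^ 2 ≤ (c + 2) * (A + B + N) * x + (A + B + N) * (A + B + N) := by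
    nlinarith [hquad, mul_nonneg (mul_nonneg hc.le hN0) hx0,
      mul_nonneg (add_nonneg hA0 hB0) hx0, sq_nonneg (A + B), sq_nonneg N,
      mul_nonneg hN0 (add_nonneg hA0 hB0)]
  have h6 : 2 * (c + 2) * (A + B + N) < c * x := by
    have h := mul_lt_mul_of_pos_left hcon hc
    have heq : c * (2 * (1 + 2 / c) * (A + B + N)) = 2 * (c + 2) * (A + B + N) := by
      field_simp
    rw [heq] at h
    linarith
  have h7 := mul_lt_mul_of_pos_right h6 hxpos
  have hq1 : (c + 2) * (A + B + N) * x ≤ c * x ^ 2 / 2 := by nlinarith [h7]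
  have hq2 : c * x ^ 2 / 2 ≤ (A + B + N) * (A + B + N) := by linarith
  have h8 : (2 * (c + 2) * (A + B + N)) * (2 * (c + 2) * (A + B + N))
      < (c * x) * (c * x) := mul_lt_mul'' h6 h6 (by positivity) (by positivity)
  have h9 : 2 * (c + 2) ^ 2 * (c * x ^ 2 / 2)
      ≤ 2 * (c + 2) ^ 2 * ((A + B + N) * (A + B + N)) :=
    mul_le_mul_of_nonneg_left hq2 (by positivity)
  have h10 : c * (c + 2) ^ 2 * x ^ 2 < c ^ 2 * x ^ 2 / 2 := by nlinarith [h8, h9]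
  have hpoly : c ^ 2 / 2 < c * (c + 2) ^ 2 := by nlinarith [hc]
  have h11 := mul_lt_mul_of_pos_right hpoly (mul_pos hxpos hxpos)
  nlinarith [h10, h11]

/-- Discrete error bound (abstract form of inequality (4.11)/(eq.
intermediate:b) in the proof of Lemma 4.5): under the inf-sup condition and the
consistency relation there exists `C > 0` depending only on the inf-sup
constant `c` such that for every `v ∈ Σ`,
`‖v − u_h‖_{m,s} ≤ C · ( m(u − v, u − v)^{1/2} + s(v, v)^{1/2} + ‖Dv − Du_h‖ )`. -/
theorem discrete_error_bound (c : ℝ) (hc : 0 < c) :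
    ∃ C : ℝ, 0 < C ∧
      ∀ (X : Type) [AddCommGroup X] [Module ℝ X]
        (Q : Type) [NormedAddCommGroup Q] [InnerProductSpace ℝ Q]
        (Sig : Submodule ℝ X)
        (m s : X →ₗ[ℝ] X →ₗ[ℝ] ℝ),
        (∀ x y : X, m x y = m y x) →
        (∀ x : X, 0 ≤ m x x) →
        (∀ x y : X, s x y = s y x) →
        (∀ x : X, 0 ≤ s x x) →
        ∀ (D : Sig →ₗ[ℝ] Q),
        -- inf-sup condition
        (∀ p : Q, ∃ w : Sig,
            Real.sqrt (m (w : X) (w : X) + s (w : X) (w : X) + ‖D w‖ ^ 2) = 1 ∧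
            c * ‖p‖ ≤ (inner ℝ (D w) p : ℝ)) →
        ∀ (u : X) (uh : Sig) (e : Q),
        -- consistency relation
        (∀ w : Sig,
            m (uh : X) (w : X) + s (uh : X) (w : X) - m u (w : X)
              = (inner ℝ (D w) e : ℝ)) →
        ∀ v : Sig,
          Real.sqrt (m ((v : X) - (uh : X)) ((v : X) - (uh : X))
              + s ((v : X) - (uh : X)) ((v : X) - (uh : X)))
            ≤ C * (Real.sqrt (m (u - (v : X)) (u - (v : X)))
              + Real.sqrt (s (v : X) (v : X)) + ‖D v - D uh‖) := by
  refine ⟨2 * (1 + 2 / c), by positivity, ?_⟩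
  intro X _ _ Q _ _ Sig m s hmsym hmpos hssym hspos D hinfsup u uh e hcons v
  -- Notation
  set d : X := (v : X) - (uh : X) with hd
  set dS : Sig := v - uh with hdS
  have hdSd : (dS : X) = d := by simp [hdS, hd]
  set A : ℝ := Real.sqrt (m (u - (v : X)) (u - (v : X))) with hA
  set B : ℝ := Real.sqrt (s (v : X) (v : X)) with hB
  set N : ℝ := ‖D v - D uh‖ with hN
  have hNdS : ‖D dS‖ = N := by rw [hdS, map_sub, hN]
  set x : ℝ := Real.sqrt (m d d + s d d) with hx
  have hmd : 0 ≤ m d d := hmpos d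
  have hsd : 0 ≤ s d d := hspos d
  have hxsq : x ^ 2 = m d d + s d d := Real.sq_sqrt (by linarith)
  have hx0 : 0 ≤ x := Real.sqrt_nonneg _
  have hA0 : 0 ≤ A := Real.sqrt_nonneg _
  have hB0 : 0 ≤ B := Real.sqrt_nonneg _
  have hN0 : 0 ≤ N := hN ▸ norm_nonneg _
  have hmdx : Real.sqrt (m d d) ≤ x := hx ▸ Real.sqrt_le_sqrt (by linarith)
  have hsdx : Real.sqrt (s d d) ≤ x := hx ▸ Real.sqrt_le_sqrt (by linarith)
  have hAs : Real.sqrt (m (u - (v : X)) (u - (v : X))) = A := rfl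
  have hBs : Real.sqrt (s (v : X) (v : X)) = B := rfl
  clear_value x A B N d dS
  -- ‖e‖ bound from inf-sup + consistency
  obtain ⟨w, hw1, hwe⟩ := hinfsup e
  have hwsum : m (w : X) (w : X) + s (w : X) (w : X) + ‖D w‖ ^ 2 = 1 := by
    have h0 : 0 ≤ m (w : X) (w : X) + s (w : X) (w : X) + ‖D w‖ ^ 2 := by
      have := hmpos (w : X); have := hspos (w : X); positivity
    have h1 := Real.sq_sqrt h0
    rw [hw1] at h1; linarith
  have hmw1 : Real.sqrt (m (w : X) (w : X)) ≤ 1 := by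
    apply Real.sqrt_le_one.mpr
    nlinarith [hspos (w : X), sq_nonneg ‖D w‖]
  have hsw1 : Real.sqrt (s (w : X) (w : X)) ≤ 1 := by
    apply Real.sqrt_le_one.mpr
    nlinarith [hmpos (w : X), sq_nonneg ‖D w‖]
  -- c‖e‖ ≤ 2x + A + B
  have hebound : c * ‖e‖ ≤ 2 * x + A + B := by
    have hcw := hcons w
    have h1 : m ((uh : X) - (v : X)) (w : X)
        ≤ Real.sqrt (m d d) * Real.sqrt (m (w : X) (w : X)) := by
      have hcs := cs_aux m hmsym hmpos ((uh : X) - (v : X)) (w : X)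
      have heq : m ((uh : X) - (v : X)) ((uh : X) - (v : X)) = m d d := by
        rw [hd]; simp only [map_sub, LinearMap.sub_apply]; ring
      rwa [heq] at hcs
    have h2 : m ((v : X) - u) (w : X) ≤ A * Real.sqrt (m (w : X) (w : X)) := by
      have hcs := cs_aux m hmsym hmpos ((v : X) - u) (w : X)
      have heq : m ((v : X) - u) ((v : X) - u) = m (u - (v : X)) (u - (v : X)) := by
        simp only [map_sub, LinearMap.sub_apply]; ring
      rw [heq, hAs] at hcs; exact hcs
    have h3 : s ((uh : X) - (v : X)) (w : X)
        ≤ Real.sqrt (s d d) * Real.sqrt (s (w : X) (w : X)) := by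
      have hcs := cs_aux s hssym hspos ((uh : X) - (v : X)) (w : X)
      have heq : s ((uh : X) - (v : X)) ((uh : X) - (v : X)) = s d d := by
        rw [hd]; simp only [map_sub, LinearMap.sub_apply]; ring
      rwa [heq] at hcs
    have h4 : s (v : X) (w : X) ≤ B * Real.sqrt (s (w : X) (w : X)) := by
      have hcs := cs_aux s hssym hspos (v : X) (w : X)
      rw [hBs] at hcs; exact hcs
    have hsplit : m (uh : X) (w : X) + s (uh : X) (w : X) - m u (w : X)
        = m ((uh : X) - (v : X)) (w : X) + m ((v : X) - u) (w : X)
          + s ((uh : X) - (v : X)) (w : X) + s (v : X) (w : X) := by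
      simp only [map_sub, LinearMap.sub_apply]; ring
    have hmwn : 0 ≤ Real.sqrt (m (w : X) (w : X)) := Real.sqrt_nonneg _
    have hswn : 0 ≤ Real.sqrt (s (w : X) (w : X)) := Real.sqrt_nonneg _
    have hmdn : 0 ≤ Real.sqrt (m d d) := Real.sqrt_nonneg _
    have hsdn : 0 ≤ Real.sqrt (s d d) := Real.sqrt_nonneg _
    calc c * ‖e‖ ≤ (inner ℝ (D w) e : ℝ) := hwe
      _ = m (uh : X) (w : X) + s (uh : X) (w : X) - m u (w : X) := (hcw).symm
      _ = m ((uh : X) - (v : X)) (w : X) + m ((v : X) - u) (w : X)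
          + s ((uh : X) - (v : X)) (w : X) + s (v : X) (w : X) := hsplit
      _ ≤ Real.sqrt (m d d) * Real.sqrt (m (w : X) (w : X))
          + A * Real.sqrt (m (w : X) (w : X))
          + Real.sqrt (s d d) * Real.sqrt (s (w : X) (w : X))
          + B * Real.sqrt (s (w : X) (w : X)) := by linarith
      _ ≤ Real.sqrt (m d d) * 1 + A * 1 + Real.sqrt (s d d) * 1 + B * 1 := by
          gcongr
      _ ≤ 2 * x + A + B := by linarith
  have he0 : 0 ≤ ‖e‖ := norm_nonneg _
  -- key identity at w = dS
  have hkey : m d d + s d d ≤ A * x + B * x + N * ‖e‖ := by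
    have hcd := hcons dS
    rw [hdSd] at hcd
    have hid : m d d + s d d
        = m ((v : X) - u) d + s (v : X) d - (inner ℝ (D dS) e : ℝ) := by
      rw [← hcd, hd]; simp only [map_sub, LinearMap.sub_apply]; ring
    have h1 : m ((v : X) - u) d ≤ A * x := by
      have hcs := cs_aux m hmsym hmpos ((v : X) - u) d
      have heq : m ((v : X) - u) ((v : X) - u) = m (u - (v : X)) (u - (v : X)) := by
        simp only [map_sub, LinearMap.sub_apply]; ring
      rw [heq, hAs] at hcs
      calc m ((v : X) - u) d ≤ A * Real.sqrt (m d d) := hcs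
        _ ≤ A * x := by gcongr
    have h2 : s (v : X) d ≤ B * x := by
      have hcs := cs_aux s hssym hspos (v : X) d
      rw [hBs] at hcs
      calc s (v : X) d ≤ B * Real.sqrt (s d d) := hcs
        _ ≤ B * x := by gcongr
    have habs := abs_real_inner_le_norm (D dS) e
    rw [hNdS] at habs
    have h3 : -(inner ℝ (D dS) e : ℝ) ≤ N * ‖e‖ := by
      have hna := neg_abs_le (inner ℝ (D dS) e : ℝ)
      linarith
    linarith
  -- quadratic inequality
  have hNe : c * (N * ‖e‖) ≤ N * (2 * x + A + B) := by
    have h := mul_le_mul_of_nonneg_left hebound hN0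
    have heq : c * (N * ‖e‖) = N * (c * ‖e‖) := by ring
    rw [heq]; exact h
  have hx2 : c * x ^ 2 = c * (m d d + s d d) := by rw [hxsq]
  have hq0 := mul_le_mul_of_nonneg_left hkey hc.le
  have hquad : c * x ^ 2 ≤ c * (A + B) * x + N * (2 * x + A + B) := by
    linarith [hq0, hNe, hx2]
  exact quad_bound c A B N x hc hA0 hB0 hN0 hx0 hquad
end

section
/- Unique solvability and equivalence of the hybridized mixed system (abstract form of Lemma 6.1): for every linear functional ℓ : Σ → ℝ and every g ∈ Q there exists a unique triple (u, p, λ) ∈ Σ × Q × Λ such that a(u, v) + ⟨Dv, p⟩ + ⟨Jv, λ⟩ = ℓ(v) for all v ∈ Σ, ⟨Du, q⟩ = ⟨g, q⟩ for all q ∈ Q, and ⟨Ju, μ⟩ = 0 for all μ ∈ Λ. Moreover this solution satisfies Ju = 0 and Du = g, and the pair (u, p) solves the non-hybrid mixed problem: a(u, v) + ⟨Dv, p⟩ = ℓ(v) for all v ∈ ker J. -/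
/-- Inner product with a fixed vector on the right, as a linear map into the dual. -/
private def innerFun (E : Type*) [NormedAddCommGroup E] [InnerProductSpace ℝ E] :
    E →ₗ[ℝ] (E →ₗ[ℝ] ℝ) where
  toFun p :=
    { toFun := fun q => (inner ℝ q p : ℝ)
      map_add' := fun x y => inner_add_left x y p
      map_smul' := fun c x => real_inner_smul_left x p c }
  map_add' x y := by ext q; simp [inner_add_right]
  map_smul' c x := by ext q; simp [real_inner_smul_right]

@[simp] private lemma innerFun_apply {E : Type*} [NormedAddCommGroup E]
    [InnerProductSpace ℝ E] (p q : E) : innerFun E p q = (inner ℝ q p : ℝ) := rfl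

/-- Unique solvability and equivalence of the hybridized mixed system (abstract
form of Lemma 6.1): for every linear functional `ℓ : Σ → ℝ` and every `g ∈ Q`
there exists a unique triple `(u, p, λ)` solving the hybridized system;
moreover this solution satisfies `Ju = 0`, `Du = g`, and `(u, p)` solves the
non-hybrid mixed problem on `ker J`. -/
theorem hybridized_mixed_wellposed
    (Sig : Type*) [NormedAddCommGroup Sig] [InnerProductSpace ℝ Sig]
    [FiniteDimensional ℝ Sig]
    (Q : Type*) [NormedAddCommGroup Q] [InnerProductSpace ℝ Q]
    [FiniteDimensional ℝ Q]
    (Lam : Type*) [NormedAddCommGroup Lam] [InnerProductSpace ℝ Lam]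
    [FiniteDimensional ℝ Lam]
    (a : Sig →ₗ[ℝ] Sig →ₗ[ℝ] ℝ)
    (ha_symm : ∀ v w : Sig, a v w = a w v)
    (ha_pos : ∀ v : Sig, 0 ≤ a v v)
    (D : Sig →ₗ[ℝ] Q) (J : Sig →ₗ[ℝ] Lam)
    -- (i) `J` is surjective
    (hJ_surj : Function.Surjective J)
    -- (ii) the restriction of `D` to `ker J` is surjective onto `Q`
    (hD_surj : ∀ q : Q, ∃ v : Sig, J v = 0 ∧ D v = q)
    -- (iii) `a` is positive definite on `ker J ∩ ker D`
    (ha_def : ∀ v : Sig, J v = 0 → D v = 0 → a v v = 0 → v = 0)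
    (ℓ : Sig →ₗ[ℝ] ℝ) (g : Q) :
    (∃! t : Sig × Q × Lam,
        (∀ v : Sig, a t.1 v + (inner ℝ (D v) t.2.1 : ℝ) + (inner ℝ (J v) t.2.2 : ℝ) = ℓ v) ∧
        (∀ q : Q, (inner ℝ (D t.1) q : ℝ) = (inner ℝ g q : ℝ)) ∧
        (∀ μ : Lam, (inner ℝ (J t.1) μ : ℝ) = 0)) ∧
    (∀ u : Sig, ∀ p : Q, ∀ lam : Lam,
        ((∀ v : Sig, a u v + (inner ℝ (D v) p : ℝ) + (inner ℝ (J v) lam : ℝ) = ℓ v) ∧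
         (∀ q : Q, (inner ℝ (D u) q : ℝ) = (inner ℝ g q : ℝ)) ∧
         (∀ μ : Lam, (inner ℝ (J u) μ : ℝ) = 0)) →
        (J u = 0 ∧ D u = g ∧
          ∀ v : Sig, J v = 0 → a u v + (inner ℝ (D v) p : ℝ) = ℓ v)) := by
  classical
  -- the big linear map encoding the system
  set Φ : (Sig × Q × Lam) →ₗ[ℝ] (Sig →ₗ[ℝ] ℝ) × Q × Lam :=
    ((a.comp (LinearMap.fst ℝ Sig (Q × Lam))
        + (D.dualMap.comp (innerFun Q)).comp
            ((LinearMap.fst ℝ Q Lam).comp (LinearMap.snd ℝ Sig (Q × Lam)))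
        + (J.dualMap.comp (innerFun Lam)).comp
            ((LinearMap.snd ℝ Q Lam).comp (LinearMap.snd ℝ Sig (Q × Lam)))).prod
      ((D.comp (LinearMap.fst ℝ Sig (Q × Lam))).prod
        (J.comp (LinearMap.fst ℝ Sig (Q × Lam))))) with hΦ
  have hΦ_apply : ∀ t : Sig × Q × Lam, ∀ v : Sig,
      (Φ t).1 v = a t.1 v + (inner ℝ (D v) t.2.1 : ℝ) + (inner ℝ (J v) t.2.2 : ℝ) := by
    intro t v; simp [hΦ, LinearMap.dualMap_apply]
  have hΦ2 : ∀ t : Sig × Q × Lam, (Φ t).2.1 = D t.1 := fun t => rfl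
  have hΦ3 : ∀ t : Sig × Q × Lam, (Φ t).2.2 = J t.1 := fun t => rfl
  -- injectivity of Φ
  have hinj : Function.Injective Φ := by
    rw [← LinearMap.ker_eq_bot, LinearMap.ker_eq_bot']
    intro t ht
    obtain ⟨u, p, lam⟩ := t
    have h1 : ∀ v : Sig, a u v + (inner ℝ (D v) p : ℝ) + (inner ℝ (J v) lam : ℝ) = 0 := by
      intro v
      have := congrArg (fun f : (Sig →ₗ[ℝ] ℝ) × Q × Lam => f.1 v) ht
      simpa [hΦ_apply (u, p, lam) v] using this
    have h2 : D u = 0 := congrArg (fun f : (Sig →ₗ[ℝ] ℝ) × Q × Lam => f.2.1) ht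
    have h3 : J u = 0 := congrArg (fun f : (Sig →ₗ[ℝ] ℝ) × Q × Lam => f.2.2) ht
    have hu : u = 0 := by
      apply ha_def u h3 h2
      have := h1 u
      rw [h2, h3] at this
      simpa using this
    subst hu
    have h1' : ∀ v : Sig, (inner ℝ (D v) p : ℝ) + (inner ℝ (J v) lam : ℝ) = 0 := by
      intro v; have := h1 v; simpa using this
    have hp : p = 0 := by
      obtain ⟨v, hv1, hv2⟩ := hD_surj p
      have := h1' v
      rw [hv1, hv2] at this
      simp only [inner_zero_left, add_zero] at this
      exact inner_self_eq_zero.mp this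
    subst hp
    have hlam : lam = 0 := by
      obtain ⟨v, hv⟩ := hJ_surj lam
      have := h1' v
      rw [hv] at this
      simp only [inner_zero_right, zero_add] at this
      exact inner_self_eq_zero.mp this
    subst hlam; rfl
  -- surjectivity of Φ by dimension count
  have hdim : Module.finrank ℝ (Sig × Q × Lam)
      = Module.finrank ℝ ((Sig →ₗ[ℝ] ℝ) × Q × Lam) := by
    simp only [Module.finrank_prod]
    have : Module.finrank ℝ (Sig →ₗ[ℝ] ℝ) = Module.finrank ℝ Sig :=
      Subspace.dual_finrank_eq
    omega
  have hsurj : Function.Surjective Φ :=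
    (LinearMap.injective_iff_surjective_of_finrank_eq_finrank hdim).mp hinj
  obtain ⟨t₀, ht₀⟩ := hsurj (ℓ, g, 0)
  -- the solution conditions are equivalent to Φ t = (ℓ, g, 0)
  have key : ∀ t : Sig × Q × Lam,
      ((∀ v : Sig, a t.1 v + (inner ℝ (D v) t.2.1 : ℝ) + (inner ℝ (J v) t.2.2 : ℝ) = ℓ v) ∧
       (∀ q : Q, (inner ℝ (D t.1) q : ℝ) = (inner ℝ g q : ℝ)) ∧
       (∀ μ : Lam, (inner ℝ (J t.1) μ : ℝ) = 0)) ↔ Φ t = (ℓ, g, 0) := by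
    intro t
    constructor
    · rintro ⟨hA, hB, hC⟩
      have e1 : (Φ t).1 = ℓ := by
        ext v; rw [hΦ_apply t v]; exact hA v
      have e2 : (Φ t).2.1 = g := by
        rw [hΦ2]
        refine ext_inner_left ℝ fun q => ?_
        simpa [real_inner_comm] using hB q
      have e3 : (Φ t).2.2 = 0 := by
        rw [hΦ3]
        refine ext_inner_left ℝ fun μ => ?_
        simpa [real_inner_comm] using hC μ
      exact Prod.ext e1 (Prod.ext e2 e3)
    · intro h
      have e1 : (Φ t).1 = ℓ := congrArg Prod.fst h
      have e2 : D t.1 = g := congrArg (fun x => x.2.1) h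
      have e3 : J t.1 = 0 := congrArg (fun x => x.2.2) h
      refine ⟨fun v => ?_, fun q => by rw [e2], fun μ => by rw [e3]; simp⟩
      rw [← hΦ_apply t v, e1]
  constructor
  · refine ⟨t₀, (key t₀).mpr ht₀, fun t ht => hinj ?_⟩
    rw [(key t).mp ht, ht₀]
  · intro u p lam h
    have h' := (key (u, p, lam)).mp h
    have e2 : D u = g := congrArg (fun x => x.2.1) h'
    have e3 : J u = 0 := congrArg (fun x => x.2.2) h'
    refine ⟨e3, e2, fun v hv => ?_⟩
    have := h.1 v
    rw [hv] at this
    simpa using this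
end

section
/- Quasi-optimality of the stabilized projection (inequality (4.5) in the proof of Lemma 4.1, with explicit constant): if f_h ∈ V is a γ-stabilized projection of f ∈ H, then for every g ∈ V one has ‖f − f_h‖ + γ^{1/2}·|f_h|_j ≤ √2 · ( ‖f − g‖ + γ^{1/2}·|g|_j ). -/
/-- Quasi-optimality of the stabilized projection (inequality (4.5) in the
proof of Lemma 4.1, with explicit constant): if `f_h ∈ V` is a γ-stabilized
projection of `f ∈ H`, then for every `g ∈ V`,
`‖f − f_h‖ + γ^{1/2}·|f_h|_j ≤ √2 · ( ‖f − g‖ + γ^{1/2}·|g|_j )`. -/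
theorem stabilized_projection_quasi_optimal
    (H : Type*) [NormedAddCommGroup H] [InnerProductSpace ℝ H]
    (V : Submodule ℝ H) [FiniteDimensional ℝ V]
    (j : H →ₗ[ℝ] H →ₗ[ℝ] ℝ)
    (hj_symm : ∀ x y : H, j x y = j y x)
    (hj_pos : ∀ x : H, 0 ≤ j x x)
    (γ : ℝ) (hγ : 0 ≤ γ)
    (f fh : H) (hfh_mem : fh ∈ V)
    (hfh : ∀ q ∈ V, (inner ℝ fh q : ℝ) + γ * j fh q = (inner ℝ f q : ℝ)) :
    ∀ g ∈ V,
      ‖f - fh‖ + Real.sqrt γ * Real.sqrt (j fh fh)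
        ≤ Real.sqrt 2 * (‖f - g‖ + Real.sqrt γ * Real.sqrt (j g g)) := by
  -- Cauchy–Schwarz for the PSD form j
  have hCS : ∀ x y : H, j x y ≤ Real.sqrt (j x x) * Real.sqrt (j y y) := by
    intro x y
    have hq : ∀ t : ℝ, 0 ≤ j x x * (t * t) + (2 * j x y) * t + j y y := by
      intro t
      have h := hj_pos (t • x + y)
      simp only [map_add, map_smul, LinearMap.add_apply, LinearMap.smul_apply,
        smul_eq_mul, hj_symm y x] at h
      nlinarith [h]
    have hd := discrim_le_zero hq
    have hsq : (j x y) ^ 2 ≤ j x x * j y y := by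
      unfold discrim at hd; nlinarith [hd]
    calc j x y ≤ |j x y| := le_abs_self _
      _ = Real.sqrt ((j x y) ^ 2) := (Real.sqrt_sq_eq_abs _).symm
      _ ≤ Real.sqrt (j x x * j y y) := Real.sqrt_le_sqrt hsq
      _ = Real.sqrt (j x x) * Real.sqrt (j y y) := Real.sqrt_mul (hj_pos x) _
  intro g hg
  -- orthogonality
  have horth : ∀ q ∈ V, (inner ℝ (f - fh) q : ℝ) = γ * j fh q := by
    intro q hq
    have := hfh q hq
    rw [inner_sub_left]; linarith
  set A := ‖f - fh‖ with hA
  set C := ‖f - g‖ with hC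
  have hAnn : 0 ≤ A := norm_nonneg _
  have hCnn : 0 ≤ C := norm_nonneg _
  set B := Real.sqrt γ * Real.sqrt (j fh fh) with hB
  set D := Real.sqrt γ * Real.sqrt (j g g) with hD
  have hBnn : 0 ≤ B := mul_nonneg (Real.sqrt_nonneg _) (Real.sqrt_nonneg _)
  have hDnn : 0 ≤ D := mul_nonneg (Real.sqrt_nonneg _) (Real.sqrt_nonneg _)
  have hB2 : B ^ 2 = γ * j fh fh := by
    rw [hB, mul_pow, Real.sq_sqrt hγ, Real.sq_sqrt (hj_pos fh)]
  have hD2 : D ^ 2 = γ * j g g := by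
    rw [hD, mul_pow, Real.sq_sqrt hγ, Real.sq_sqrt (hj_pos g)]
  -- key identity/inequality : A² + B² ≤ A*C + B*D
  have hkey : A ^ 2 + B ^ 2 ≤ A * C + B * D := by
    have hdec : (inner ℝ (f - fh) (f - fh) : ℝ)
        = (inner ℝ (f - fh) (f - g) : ℝ) + (inner ℝ (f - fh) (g - fh) : ℝ) := by
      rw [← inner_add_right]; congr 1; abel
    have h1 : (inner ℝ (f - fh) (g - fh) : ℝ) = γ * j fh (g - fh) :=
      horth _ (Submodule.sub_mem V hg hfh_mem)
    have h2 : j fh (g - fh) = j fh g - j fh fh := by simp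
    have hnsq : (inner ℝ (f - fh) (f - fh) : ℝ) = A ^ 2 := by
      rw [real_inner_self_eq_norm_sq]
    have hip : (inner ℝ (f - fh) (f - g) : ℝ) ≤ A * C :=
      real_inner_le_norm _ _
    have hjcs : γ * j fh g ≤ B * D := by
      have := hCS fh g
      have h3 : γ * j fh g ≤ γ * (Real.sqrt (j fh fh) * Real.sqrt (j g g)) :=
        mul_le_mul_of_nonneg_left this hγ
      have h4 : γ = Real.sqrt γ * Real.sqrt γ := (Real.mul_self_sqrt hγ).symm
      calc γ * j fh g ≤ γ * (Real.sqrt (j fh fh) * Real.sqrt (j g g)) := h3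
        _ = B * D := by
            rw [hB, hD, show (Real.sqrt γ * Real.sqrt (j fh fh)) *
              (Real.sqrt γ * Real.sqrt (j g g)) = (Real.sqrt γ * Real.sqrt γ) *
              (Real.sqrt (j fh fh) * Real.sqrt (j g g)) from by ring,
              Real.mul_self_sqrt hγ]
    have := hdec
    rw [hnsq, h1, h2] at this
    -- A² + γ j fh fh = ⟪f-fh, f-g⟫ + γ j fh g
    have hid : A ^ 2 + γ * j fh fh = (inner ℝ (f - fh) (f - g) : ℝ) + γ * j fh g := by
      linarith [this]
    rw [hB2]; linarith
  -- from A²+B² ≤ AC+BD deduce A²+B² ≤ C²+D² (AM-GM) then conclude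
  have hsum : A ^ 2 + B ^ 2 ≤ C ^ 2 + D ^ 2 := by
    nlinarith [sq_nonneg (A - C), sq_nonneg (B - D)]
  have hs2 : Real.sqrt 2 ^ 2 = 2 := Real.sq_sqrt (by norm_num)
  have hs2nn : (0:ℝ) ≤ Real.sqrt 2 := Real.sqrt_nonneg 2
  have h1 : (A + B) ^ 2 ≤ (Real.sqrt 2 * (C + D)) ^ 2 := by
    rw [mul_pow, hs2]
    nlinarith [sq_nonneg (A - B), mul_nonneg hCnn hDnn]
  calc A + B = Real.sqrt ((A + B) ^ 2) :=
        (Real.sqrt_sq (add_nonneg hAnn hBnn)).symm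
    _ ≤ Real.sqrt ((Real.sqrt 2 * (C + D)) ^ 2) := Real.sqrt_le_sqrt h1
    _ = Real.sqrt 2 * (C + D) :=
        Real.sqrt_sq (mul_nonneg hs2nn (add_nonneg hCnn hDnn))
end

section
/- Duality bound for the stabilized projection (the product estimate in the proof of the −2-norm bound in Lemma 4.1, with constant 1): if f_h ∈ V is a γ-stabilized projection of f ∈ H and v* ∈ V is a γ-stabilized projection of v ∈ H, then |⟨f − f_h, v⟩| ≤ ( ‖f − f_h‖ + γ^{1/2}·|f_h|_j ) · ( ‖v − v*‖ + γ^{1/2}·|v*|_j ). -/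
/-- Cauchy–Schwarz for a positive semidefinite symmetric bilinear form. -/
lemma psd_cauchy_schwarz (H : Type*) [AddCommGroup H] [Module ℝ H]
    (j : H →ₗ[ℝ] H →ₗ[ℝ] ℝ)
    (hj_symm : ∀ x y : H, j x y = j y x)
    (hj_pos : ∀ x : H, 0 ≤ j x x)
    (x y : H) : |j x y| ≤ Real.sqrt (j x x) * Real.sqrt (j y y) := by
  have hdisc : discrim (j y y) (2 * j x y) (j x x) ≤ 0 := by
    apply discrim_le_zero
    intro t
    have := hj_pos (x + t • y)
    have hexp : j (x + t • y) (x + t • y)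
        = j y y * t ^ 2 + 2 * j x y * t + j x x := by
      simp [map_add, map_smul, hj_symm y x]
      ring
    linarith [hexp ▸ this]
  rw [discrim] at hdisc
  have h1 : (j x y) ^ 2 ≤ j x x * j y y := by nlinarith
  calc |j x y| = Real.sqrt ((j x y) ^ 2) := by rw [Real.sqrt_sq_eq_abs]
    _ ≤ Real.sqrt (j x x * j y y) := Real.sqrt_le_sqrt h1
    _ = Real.sqrt (j x x) * Real.sqrt (j y y) := Real.sqrt_mul (hj_pos x) _

/-- Duality bound for the stabilized projection (the product estimate in the
proof of the −2-norm bound in Lemma 4.1, with constant 1): if `f_h ∈ V` is a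
γ-stabilized projection of `f ∈ H` and `v* ∈ V` is a γ-stabilized projection
of `v ∈ H`, then
`|⟨f − f_h, v⟩| ≤ (‖f − f_h‖ + γ^{1/2}·|f_h|_j)·(‖v − v*‖ + γ^{1/2}·|v*|_j)`. -/
theorem stabilized_projection_duality_bound
    (H : Type*) [NormedAddCommGroup H] [InnerProductSpace ℝ H]
    (V : Submodule ℝ H) [FiniteDimensional ℝ V]
    (j : H →ₗ[ℝ] H →ₗ[ℝ] ℝ)
    (hj_symm : ∀ x y : H, j x y = j y x)
    (hj_pos : ∀ x : H, 0 ≤ j x x)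
    (γ : ℝ) (hγ : 0 ≤ γ)
    (f fh : H) (hfh_mem : fh ∈ V)
    (hfh : ∀ q ∈ V, (inner ℝ fh q : ℝ) + γ * j fh q = (inner ℝ f q : ℝ))
    (v vs : H) (hvs_mem : vs ∈ V)
    (hvs : ∀ q ∈ V, (inner ℝ vs q : ℝ) + γ * j vs q = (inner ℝ v q : ℝ)) :
    |(inner ℝ (f - fh) v : ℝ)|
      ≤ (‖f - fh‖ + Real.sqrt γ * Real.sqrt (j fh fh))
        * (‖v - vs‖ + Real.sqrt γ * Real.sqrt (j vs vs)) := by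
  have hkey : (inner ℝ (f - fh) v : ℝ)
      = (inner ℝ (f - fh) (v - vs) : ℝ) + γ * j fh vs := by
    have h1 := hfh vs hvs_mem
    have h2 : (inner ℝ (f - fh) v : ℝ)
        = (inner ℝ (f - fh) (v - vs) : ℝ) + ((inner ℝ f vs : ℝ) - inner ℝ fh vs) := by
      simp only [inner_sub_left, inner_sub_right]; ring
    rw [h2]; linarith
  have hcs1 : |(inner ℝ (f - fh) (v - vs) : ℝ)| ≤ ‖f - fh‖ * ‖v - vs‖ :=
    abs_real_inner_le_norm _ _
  have hcs2 : |j fh vs| ≤ Real.sqrt (j fh fh) * Real.sqrt (j vs vs) :=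
    psd_cauchy_schwarz H j hj_symm hj_pos fh vs
  have hγs : Real.sqrt γ * Real.sqrt γ = γ := Real.mul_self_sqrt hγ
  have hbound : |(inner ℝ (f - fh) v : ℝ)|
      ≤ ‖f - fh‖ * ‖v - vs‖
        + (Real.sqrt γ * Real.sqrt (j fh fh)) * (Real.sqrt γ * Real.sqrt (j vs vs)) := by
    rw [hkey]
    calc |(inner ℝ (f - fh) (v - vs) : ℝ) + γ * j fh vs|
        ≤ |(inner ℝ (f - fh) (v - vs) : ℝ)| + |γ * j fh vs| := abs_add_le _ _
      _ ≤ ‖f - fh‖ * ‖v - vs‖ + γ * |j fh vs| := by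
          rw [abs_mul, abs_of_nonneg hγ]; linarith
      _ ≤ ‖f - fh‖ * ‖v - vs‖
          + (Real.sqrt γ * Real.sqrt (j fh fh)) * (Real.sqrt γ * Real.sqrt (j vs vs)) := by
          have h3 : γ * |j fh vs| ≤ γ * (Real.sqrt (j fh fh) * Real.sqrt (j vs vs)) :=
            mul_le_mul_of_nonneg_left hcs2 hγ
          have heq : (Real.sqrt γ * Real.sqrt (j fh fh)) * (Real.sqrt γ * Real.sqrt (j vs vs))
              = γ * (Real.sqrt (j fh fh) * Real.sqrt (j vs vs)) := by rw [mul_mul_mul_comm, hγs]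
          linarith
  have hA : (0:ℝ) ≤ ‖f - fh‖ := norm_nonneg _
  have hB : (0:ℝ) ≤ Real.sqrt γ * Real.sqrt (j fh fh) :=
    mul_nonneg (Real.sqrt_nonneg _) (Real.sqrt_nonneg _)
  have hC : (0:ℝ) ≤ ‖v - vs‖ := norm_nonneg _
  have hD : (0:ℝ) ≤ Real.sqrt γ * Real.sqrt (j vs vs) :=
    mul_nonneg (Real.sqrt_nonneg _) (Real.sqrt_nonneg _)
  nlinarith [hbound, mul_nonneg hA hD, mul_nonneg hB hC]
end

section
/- Aubin–Nitsche-type bound for the stabilized projection (combining inequality (4.5) with the duality bound, underlying the −2-norm estimate in Lemma 4.1): if f_h ∈ V is a γ-stabilized projection of f ∈ H and v* ∈ V is a γ-stabilized projection of v ∈ H, then for all g, h ∈ V one has |⟨f − f_h, v⟩| ≤ 2 · ( ‖f − g‖ + γ^{1/2}·|g|_j ) · ( ‖v − h‖ + γ^{1/2}·|h|_j ). -/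
set_option maxHeartbeats 1000000

lemma aux_j_cs {H : Type*} [AddCommGroup H] [Module ℝ H]
    (j : H →ₗ[ℝ] H →ₗ[ℝ] ℝ)
    (hj_symm : ∀ x y : H, j x y = j y x)
    (hj_pos : ∀ x : H, 0 ≤ j x x)
    (x y : H) : j x y ^ 2 ≤ j x x * j y y := by
  have key : ∀ t : ℝ, 0 ≤ j y y * (t * t) + (2 * j x y) * t + j x x := by
    intro t
    have h := hj_pos (x + t • y)
    simp only [map_add, map_smul, LinearMap.add_apply, LinearMap.smul_apply,
      smul_eq_mul] at h
    rw [hj_symm y x] at h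
    ring_nf at h ⊢
    linarith
  have hd := discrim_le_zero key
  rw [discrim] at hd
  nlinarith [hd]

lemma aux_j_cs_abs {H : Type*} [AddCommGroup H] [Module ℝ H]
    (j : H →ₗ[ℝ] H →ₗ[ℝ] ℝ)
    (hj_symm : ∀ x y : H, j x y = j y x)
    (hj_pos : ∀ x : H, 0 ≤ j x x)
    (x y : H) : |j x y| ≤ Real.sqrt (j x x) * Real.sqrt (j y y) := by
  have h := aux_j_cs j hj_symm hj_pos x y
  have h1 : |j x y| = Real.sqrt ((j x y) ^ 2) := (Real.sqrt_sq_eq_abs _).symm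
  rw [h1, ← Real.sqrt_mul (hj_pos x)]
  exact Real.sqrt_le_sqrt h

/-- Aubin–Nitsche-type bound for the stabilized projection (combining
inequality (4.5) with the duality bound, underlying the −2-norm estimate in
Lemma 4.1): if `f_h ∈ V` is a γ-stabilized projection of `f ∈ H` and `v* ∈ V`
is a γ-stabilized projection of `v ∈ H`, then for all `g, h ∈ V`,
`|⟨f − f_h, v⟩| ≤ 2·(‖f − g‖ + γ^{1/2}·|g|_j)·(‖v − h‖ + γ^{1/2}·|h|_j)`. -/
theorem stabilized_projection_aubin_nitsche
    (H : Type*) [NormedAddCommGroup H] [InnerProductSpace ℝ H]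
    (V : Submodule ℝ H) [FiniteDimensional ℝ V]
    (j : H →ₗ[ℝ] H →ₗ[ℝ] ℝ)
    (hj_symm : ∀ x y : H, j x y = j y x)
    (hj_pos : ∀ x : H, 0 ≤ j x x)
    (γ : ℝ) (hγ : 0 ≤ γ)
    (f fh : H) (hfh_mem : fh ∈ V)
    (hfh : ∀ q ∈ V, (inner ℝ fh q : ℝ) + γ * j fh q = (inner ℝ f q : ℝ))
    (v vs : H) (hvs_mem : vs ∈ V)
    (hvs : ∀ q ∈ V, (inner ℝ vs q : ℝ) + γ * j vs q = (inner ℝ v q : ℝ)) :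
    ∀ g ∈ V, ∀ h ∈ V,
      |(inner ℝ (f - fh) v : ℝ)|
        ≤ 2 * (‖f - g‖ + Real.sqrt γ * Real.sqrt (j g g))
          * (‖v - h‖ + Real.sqrt γ * Real.sqrt (j h h)) := by
  intro g hg h hh
  set sγ := Real.sqrt γ with hsγ
  have hsγ_nonneg : 0 ≤ sγ := Real.sqrt_nonneg γ
  have hsγ_sq : sγ * sγ = γ := Real.mul_self_sqrt hγ
  -- orthogonality
  have ortho : ∀ q ∈ V, (inner ℝ (f - fh) q : ℝ) = γ * j fh q := by
    intro q hq
    have := hfh q hq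
    rw [inner_sub_left]
    linarith
  set e := fh - g with he
  have he_mem : e ∈ V := V.sub_mem hfh_mem hg
  -- key quasi-optimality computation
  have hinner_e : (inner ℝ e e : ℝ) = (inner ℝ (f - g) e : ℝ) - γ * j fh e := by
    have h1 := ortho e he_mem
    have h1' : (inner ℝ (f - fh) e : ℝ) = (inner ℝ f e : ℝ) - (inner ℝ fh e : ℝ) :=
      inner_sub_left _ _ _
    have h2 : (inner ℝ e e : ℝ) = (inner ℝ fh e : ℝ) - (inner ℝ g e : ℝ) := by
      rw [he]; exact inner_sub_left _ _ _
    have h3 : (inner ℝ (f - g) e : ℝ) = (inner ℝ f e : ℝ) - (inner ℝ g e : ℝ) :=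
      inner_sub_left _ _ _
    rw [h2, h3]
    linarith
  have hje : j e e = j fh e - j g e := by
    simp only [he, map_sub, LinearMap.sub_apply]
    rw [hj_symm g fh]
  set A := ‖f - g‖ with hA
  set B := sγ * Real.sqrt (j g g) with hB
  set A' := ‖v - h‖ with hA'
  set B' := sγ * Real.sqrt (j h h) with hB'
  have hA_nonneg : 0 ≤ A := norm_nonneg _
  have hA'_nonneg : 0 ≤ A' := norm_nonneg _
  have hB_nonneg : 0 ≤ B := mul_nonneg hsγ_nonneg (Real.sqrt_nonneg _)
  have hB'_nonneg : 0 ≤ B' := mul_nonneg hsγ_nonneg (Real.sqrt_nonneg _)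
  set a := ‖e‖ with ha
  set b := sγ * Real.sqrt (j e e) with hb
  have ha_nonneg : 0 ≤ a := norm_nonneg _
  have hb_nonneg : 0 ≤ b := mul_nonneg hsγ_nonneg (Real.sqrt_nonneg _)
  have hb_sq : b * b = γ * j e e := by
    rw [hb]
    rw [show sγ * Real.sqrt (j e e) * (sγ * Real.sqrt (j e e))
        = (sγ * sγ) * (Real.sqrt (j e e) * Real.sqrt (j e e)) by ring,
      hsγ_sq, Real.mul_self_sqrt (hj_pos e)]
  -- energy estimate: a^2 + b^2 ≤ A*a + B*b
  have hkey : a * a + b * b ≤ A * a + B * b := by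
    have h1 : (inner ℝ e e : ℝ) = a * a := by
      rw [ha, ← real_inner_self_eq_norm_mul_norm]
    have h2 : (inner ℝ (f - g) e : ℝ) ≤ A * a := real_inner_le_norm _ _
    have h3 : a * a + γ * j e e = (inner ℝ (f - g) e : ℝ) - γ * j g e := by
      rw [← h1, hinner_e, hje]; ring
    have habs : -(j g e) ≤ Real.sqrt (j g g) * Real.sqrt (j e e) := by
      have h1' := neg_abs_le (j g e)
      linarith [aux_j_cs_abs j hj_symm hj_pos g e]
    have h4 : -(γ * j g e) ≤ γ * (Real.sqrt (j g g) * Real.sqrt (j e e)) := by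
      nlinarith [habs, hγ]
    have h5 : γ * (Real.sqrt (j g g) * Real.sqrt (j e e)) = B * b := by
      rw [hB, hb, ← hsγ_sq]; ring
    rw [hb_sq]
    linarith
  -- deduce a ≤ A + B and b ≤ A + B
  have ha_le : a ≤ A + B := by nlinarith [sq_nonneg (b - B), sq_nonneg (a - A - B)]
  have hb_le : b ≤ A + B := by nlinarith [sq_nonneg (a - A), sq_nonneg (b - A - B)]
  -- norm bound for f - fh
  have hffh : ‖f - fh‖ ≤ A + a := by
    have heq : f - fh = (f - g) - e := by rw [he]; abel
    rw [heq]
    exact norm_sub_le _ _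
  -- seminorm bound for fh
  have hjfh : sγ * Real.sqrt (j fh fh) ≤ B + b := by
    have hfh_eq : fh = g + e := by rw [he]; abel
    have hexp : j fh fh = j g g + 2 * j g e + j e e := by
      simp only [hfh_eq, map_add, LinearMap.add_apply]
      rw [hj_symm e g]
      ring
    have habs := aux_j_cs_abs j hj_symm hj_pos g e
    have hle : j fh fh ≤ (Real.sqrt (j g g) + Real.sqrt (j e e)) ^ 2 := by
      rw [hexp]
      have h1 : Real.sqrt (j g g) * Real.sqrt (j g g) = j g g :=
        Real.mul_self_sqrt (hj_pos g)
      have h2 : Real.sqrt (j e e) * Real.sqrt (j e e) = j e e :=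
        Real.mul_self_sqrt (hj_pos e)
      nlinarith [le_abs_self (j g e)]
    have hsq : Real.sqrt (j fh fh) ≤ Real.sqrt (j g g) + Real.sqrt (j e e) := by
      have h0 : 0 ≤ Real.sqrt (j g g) + Real.sqrt (j e e) :=
        add_nonneg (Real.sqrt_nonneg _) (Real.sqrt_nonneg _)
      have h0' := Real.sqrt_le_sqrt hle
      rwa [Real.sqrt_sq h0] at h0'
    calc sγ * Real.sqrt (j fh fh)
        ≤ sγ * (Real.sqrt (j g g) + Real.sqrt (j e e)) :=
          mul_le_mul_of_nonneg_left hsq hsγ_nonneg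
      _ = B + b := by rw [hB, hb]; ring
  -- duality splitting
  have hsplit : (inner ℝ (f - fh) v : ℝ)
      = (inner ℝ (f - fh) (v - h) : ℝ) + γ * j fh h := by
    rw [← ortho h hh, inner_sub_right]
    ring
  have hterm1 : |(inner ℝ (f - fh) (v - h) : ℝ)| ≤ (A + a) * A' := by
    calc |(inner ℝ (f - fh) (v - h) : ℝ)| ≤ ‖f - fh‖ * ‖v - h‖ :=
          abs_real_inner_le_norm _ _
      _ ≤ (A + a) * A' := mul_le_mul_of_nonneg_right hffh (norm_nonneg _)
  have hterm2 : |γ * j fh h| ≤ (B + b) * B' := by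
    have habs := aux_j_cs_abs j hj_symm hj_pos fh h
    have h1 : |γ * j fh h| = γ * |j fh h| := by
      rw [abs_mul, abs_of_nonneg hγ]
    rw [h1]
    have h2 : γ * |j fh h| ≤ γ * (Real.sqrt (j fh fh) * Real.sqrt (j h h)) :=
      mul_le_mul_of_nonneg_left habs hγ
    have h3 : γ * (Real.sqrt (j fh fh) * Real.sqrt (j h h))
        = (sγ * Real.sqrt (j fh fh)) * B' := by
      rw [hB', ← hsγ_sq]; ring
    have h4 : (sγ * Real.sqrt (j fh fh)) * B' ≤ (B + b) * B' :=
      mul_le_mul_of_nonneg_right hjfh hB'_nonneg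
    linarith
  have hfinal : |(inner ℝ (f - fh) v : ℝ)| ≤ (A + a) * A' + (B + b) * B' := by
    rw [hsplit]
    calc |(inner ℝ (f - fh) (v - h) : ℝ) + γ * j fh h|
        ≤ |(inner ℝ (f - fh) (v - h) : ℝ)| + |γ * j fh h| := abs_add_le _ _
      _ ≤ (A + a) * A' + (B + b) * B' := add_le_add hterm1 hterm2
  calc |(inner ℝ (f - fh) v : ℝ)| ≤ (A + a) * A' + (B + b) * B' := hfinal
    _ ≤ 2 * (A + B) * (A' + B') := by nlinarith [ha_le, hb_le]
end
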